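/- Let f : ℤⁿ → ℝ ∪ {+∞} be integrally convex and x* ∈ dom f. Then x* minimizes f over ℤⁿ if and only if f(x*) ≤ f(x* + d) for all d ∈ {−1, 0, +1}ⁿ. -/
import Mathlib


open scoped BigOperators

noncomputable section

/-- Integer neighborhood `N(x)` of a real point. -/
def intNbhd {n : ℕ} (x : Fin n → ℝ) : Set (Fin n → ℤ) :=
  {z | ∀ i, |x i - (z i : ℝ)| < 1}

/-- Local convex extension of `f : ℤⁿ → ℝ ∪ {+∞}`. -/
noncomputable def localExt {n : ℕ} (f : (Fin n → ℤ) → EReal) (x : Fin n → ℝ) : EReal :=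
  sInf { v : EReal | ∃ (m : ℕ) (lam : Fin m → ℝ) (y : Fin m → (Fin n → ℤ)),
      (∀ j, 0 ≤ lam j) ∧ (∑ j, lam j) = 1 ∧ (∀ j, y j ∈ intNbhd x) ∧
      (∀ i, (∑ j, lam j * ((y j i : ℝ))) = x i) ∧
      v = ∑ j, (((lam j : ℝ) : EReal) * f (y j)) }

/-- A function is integrally convex if its local convex extension is convex. -/
def IsIntegrallyConvexFn {n : ℕ} (f : (Fin n → ℤ) → EReal) : Prop :=
  ∀ x y : Fin n → ℝ, ∀ t : ℝ, 0 ≤ t → t ≤ 1 →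
    localExt f (fun i => t * x i + (1 - t) * y i) ≤
      ((t : ℝ) : EReal) * localExt f x + (((1 - t : ℝ)) : EReal) * localExt f y

/-- Coercion of an integer point to a real point. -/
def realify {n : ℕ} (z : Fin n → ℤ) : Fin n → ℝ := fun i => (z i : ℝ)

/-- A set `S ⊆ ℤⁿ` is integrally convex. -/
def IsIntegrallyConvexSet {n : ℕ} (S : Set (Fin n → ℤ)) : Prop :=
  ∀ x : Fin n → ℝ, x ∈ convexHull ℝ (realify '' S) →
    x ∈ convexHull ℝ (realify '' (S ∩ intNbhd x))

private lemma ereal_coe_sum {m : ℕ} (g : Fin m → ℝ) :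
    ((∑ j, g j : ℝ) : EReal) = ∑ j, ((g j : ℝ) : EReal) :=
  map_sum (⟨⟨Real.toEReal, EReal.coe_zero⟩, EReal.coe_add⟩ : ℝ →+ EReal) g Finset.univ

private lemma localExt_le_self {n : ℕ} (f : (Fin n → ℤ) → EReal) (z : Fin n → ℤ) :
    localExt f (realify z) ≤ f z := by
  apply sInf_le
  refine ⟨1, fun _ => 1, fun _ => z, fun _ => zero_le_one, by simp, ?_, ?_, ?_⟩
  · intro j i; simp [intNbhd, realify]
  · intro i; simp [realify]
  · simp

/-- Local characterization of global minimality for integrally convex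
functions. -/
theorem integrally_convex_local_opt {n : ℕ}
    (f : (Fin n → ℤ) → EReal) (hbot : ∀ x, f x ≠ ⊥)
    (hf : IsIntegrallyConvexFn f)
    (xstar : Fin n → ℤ) (hdom : f xstar ≠ ⊤) :
    (∀ w : Fin n → ℤ, f xstar ≤ f w) ↔
      (∀ d : Fin n → ℤ, (∀ i, |d i| ≤ 1) → f xstar ≤ f (xstar + d)) := by
  constructor
  · intro h d _
    exact h _
  · intro h w
    have hfx : f xstar = ((f xstar).toReal : EReal) := (EReal.coe_toReal hdom (hbot _)).symm
    set r := (f xstar).toReal with hr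
    set S : ℝ := ∑ i, |((w i - xstar i : ℤ) : ℝ)| with hS
    have hS0 : (0 : ℝ) ≤ S := Finset.sum_nonneg fun i _ => abs_nonneg _
    set t : ℝ := (1 + S)⁻¹ with ht
    have ht0 : 0 < t := inv_pos.2 (by linarith)
    have ht1 : t ≤ 1 := by
      rw [ht]
      apply inv_le_one_of_one_le₀
      linarith
    have hmul : t * (1 + S) = 1 := inv_mul_cancel₀ (by linarith)
    have hbound : ∀ i, t * |(w i : ℝ) - (xstar i : ℝ)| ≤ 1 := by
      intro i
      have h1 : |(w i : ℝ) - (xstar i : ℝ)| ≤ S := by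
        rw [hS]
        have h2 := Finset.single_le_sum (f := fun i => |((w i - xstar i : ℤ) : ℝ)|)
          (fun i _ => abs_nonneg _) (Finset.mem_univ i)
        push_cast at h2 ⊢
        linarith
      nlinarith
    set p : Fin n → ℝ := fun i => t * realify w i + (1 - t) * realify xstar i with hp
    have hlow : (r : EReal) ≤ localExt f p := by
      apply le_sInf
      rintro v ⟨m, lam, y, hlam0, hlam1, hN, -, rfl⟩
      have key : ∀ j, (r : EReal) ≤ f (y j) := by
        intro j
        have hd : ∀ i, |(y j - xstar) i| ≤ 1 := by
          intro i
          have h3 := hN j i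
          have h4 : |p i - (xstar i : ℝ)| ≤ 1 := by
            have h5 : p i - (xstar i : ℝ) = t * ((w i : ℝ) - (xstar i : ℝ)) := by
              simp only [hp, realify]; ring
            rw [h5, abs_mul, abs_of_pos ht0]
            exact hbound i
          have h6 : |((y j i : ℝ)) - (xstar i : ℝ)| < 2 := by
            calc |((y j i : ℝ)) - (xstar i : ℝ)|
                ≤ |((y j i : ℝ)) - p i| + |p i - (xstar i : ℝ)| := abs_sub_le _ _ _
              _ < 1 + 1 := by
                  apply add_lt_add_of_lt_of_le _ h4
                  rw [abs_sub_comm]; exact h3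
              _ = 2 := by norm_num
          have h7 : |((y j i - xstar i : ℤ) : ℝ)| < 2 := by push_cast; exact h6
          have h9 : |y j i - xstar i| < 2 := by exact_mod_cast h7
          simp only [Pi.sub_apply]
          omega
        have h10 := h (y j - xstar) hd
        rw [hfx] at h10
        simpa using h10
      calc (r : EReal) = ((∑ j, lam j * r : ℝ) : EReal) := by
            rw [← Finset.sum_mul, hlam1, one_mul]
        _ = ∑ j, ((lam j * r : ℝ) : EReal) := ereal_coe_sum _
        _ = ∑ j, ((lam j : ℝ) : EReal) * ((r : ℝ) : EReal) := by
            simp [EReal.coe_mul]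
        _ ≤ ∑ j, ((lam j : ℝ) : EReal) * f (y j) :=
            Finset.sum_le_sum fun j _ =>
              mul_le_mul_of_nonneg_left (key j) (EReal.coe_nonneg.2 (hlam0 j))
    have hconv := hf (realify w) (realify xstar) t ht0.le ht1
    have hup : localExt f p ≤ ((t : ℝ) : EReal) * f w + ((1 - t : ℝ) : EReal) * f xstar := by
      refine le_trans hconv (add_le_add ?_ ?_)
      · exact mul_le_mul_of_nonneg_left (localExt_le_self f w) (EReal.coe_nonneg.2 ht0.le)
      · exact mul_le_mul_of_nonneg_left (localExt_le_self f xstar)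
          (EReal.coe_nonneg.2 (by linarith))
    have hmain : (r : EReal) ≤ ((t : ℝ) : EReal) * f w + ((1 - t : ℝ) : EReal) * f xstar :=
      le_trans hlow hup
    by_cases hw : f w = ⊤
    · rw [hw]; exact le_top
    · have hfw : f w = ((f w).toReal : EReal) := (EReal.coe_toReal hw (hbot _)).symm
      set s := (f w).toReal with hs
      rw [hfx, hfw] at hmain
      rw [← EReal.coe_mul, ← EReal.coe_mul, ← EReal.coe_add, EReal.coe_le_coe_iff] at hmain
      rw [hfx, hfw, EReal.coe_le_coe_iff]
      nlinarith
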